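/- CPT satisfies strict first-order stochastic dominance in the following sense: if lottery L' is obtained from lottery L by shifting a positive amount of probability mass from an outcome γ to an outcome γ' with strictly higher value v(γ') > v(γ), then the CPT value satisfies V(L') > V(L), provided the probability weighting functions are strictly increasing. -/

import Mathlib

open Finset

noncomputable def cumC (k : ℕ) (p : Fin k → ℝ) (β : Equiv.Perm (Fin k)) (j : ℕ) : ℝ :=
  ∑ l : Fin k, if (l : ℕ) < j then p (β l) else 0

noncomputable def cumT (k : ℕ) (p : Fin k → ℝ) (β : Equiv.Perm (Fin k)) (j : ℕ) : ℝ :=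
  ∑ l : Fin k, if j ≤ (l : ℕ) then p (β l) else 0

noncomputable def piPlus (k : ℕ) (p : Fin k → ℝ) (β : Equiv.Perm (Fin k)) (wp : ℝ → ℝ)
    (j : ℕ) : ℝ :=
  wp (cumC k p β (j + 1)) - wp (cumC k p β j)

noncomputable def piMinus (k : ℕ) (p : Fin k → ℝ) (β : Equiv.Perm (Fin k)) (wm : ℝ → ℝ)
    (j : ℕ) : ℝ :=
  wm (cumT k p β j) - wm (cumT k p β (j + 1))

noncomputable def cptValue (k : ℕ) (p v : Fin k → ℝ) (β : Equiv.Perm (Fin k)) (jr : ℕ)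
    (wp wm : ℝ → ℝ) : ℝ :=
  ∑ j : Fin k,
    if (j : ℕ) < jr then piPlus k p β wp j * v (β j) else piMinus k p β wm j * v (β j)

/-! ### Auxiliary definitions and lemmas -/

noncomputable def Uf (k : ℕ) (v : Fin k → ℝ) (β : Equiv.Perm (Fin k)) (j : ℕ) : ℝ :=
  if h : j < k then v (β ⟨j, h⟩) else 0

noncomputable def Dfun (k : ℕ) (p v : Fin k → ℝ) (t : ℝ) : ℝ :=
  ∑ i : Fin k, if t ≤ v i then p i else 0

/-- sorted rearrangements of the same function agree -/
lemma sorted_perm_eq {k : ℕ} (v : Fin k → ℝ) (β β' : Equiv.Perm (Fin k))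
    (hs : ∀ j j' : Fin k, j ≤ j' → v (β j') ≤ v (β j))
    (hs' : ∀ j j' : Fin k, j ≤ j' → v (β' j') ≤ v (β' j)) :
    ∀ j, v (β j) = v (β' j) := by
  have hperm : (List.ofFn (fun j => v (β j))).Perm (List.ofFn (fun j => v (β' j))) := by
    rw [← Multiset.coe_eq_coe]
    have h1 : ∀ (σ : Equiv.Perm (Fin k)),
        ((List.ofFn (fun j => v (σ j)) : List ℝ) : Multiset ℝ) = Multiset.map v Finset.univ.val := by
      intro σ
      have : ((List.ofFn (fun j => v (σ j)) : List ℝ) : Multiset ℝ)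
          = Multiset.map (fun j => v (σ j)) Finset.univ.val := by
        rw [List.ofFn_eq_map]; simp [Fin.univ_def]
      rw [this]
      have h2 : Multiset.map (fun j => v (σ j)) Finset.univ.val
          = Multiset.map v (Multiset.map σ Finset.univ.val) := by
        rw [Multiset.map_map]; rfl
      rw [h2]
      congr 1
      have := Finset.map_univ_equiv (σ : Fin k ≃ Fin k)
      have h3 := congrArg Finset.val this
      simp only [Finset.map_val] at h3
      exact h3
    rw [h1 β, h1 β']
  have anti : IsAntisymm ℝ (· ≥ ·) := ⟨fun a b h h' => le_antisymm h' h⟩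
  have hsorted : ∀ (σ : Equiv.Perm (Fin k)), (∀ j j' : Fin k, j ≤ j' → v (σ j') ≤ v (σ j)) →
      (List.ofFn (fun j => v (σ j))).Pairwise (· ≥ ·) := by
    intro σ hσ
    rw [List.pairwise_ofFn]
    intro i j hij
    exact hσ i j hij.le
  have := List.Perm.eq_of_pairwise (fun a b _ _ h h' => le_antisymm h' h) (hsorted β hs) (hsorted β' hs') hperm
  have := List.ofFn_injective this
  intro j
  exact congrFun this j

lemma cumC_zero (k : ℕ) (p : Fin k → ℝ) (β : Equiv.Perm (Fin k)) : cumC k p β 0 = 0 := by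
  simp [cumC]

lemma cumC_k (k : ℕ) (p : Fin k → ℝ) (β : Equiv.Perm (Fin k)) : cumC k p β k = ∑ i, p i := by
  unfold cumC
  rw [show (∑ l : Fin k, if (l : ℕ) < k then p (β l) else 0) = ∑ l : Fin k, p (β l) by
    apply Finset.sum_congr rfl; intro l _; exact if_pos l.isLt]
  exact Equiv.sum_comp β p

lemma cumT_k (k : ℕ) (p : Fin k → ℝ) (β : Equiv.Perm (Fin k)) : cumT k p β k = 0 := by
  unfold cumT
  apply Finset.sum_eq_zero
  intro l _
  exact if_neg (by have := l.isLt; omega)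

lemma cumT_zero (k : ℕ) (p : Fin k → ℝ) (β : Equiv.Perm (Fin k)) : cumT k p β 0 = ∑ i, p i := by
  unfold cumT
  rw [show (∑ l : Fin k, if 0 ≤ (l : ℕ) then p (β l) else 0) = ∑ l : Fin k, p (β l) by
    apply Finset.sum_congr rfl; intro l _; exact if_pos (Nat.zero_le _)]
  exact Equiv.sum_comp β p

lemma cumC_add_cumT (k : ℕ) (p : Fin k → ℝ) (β : Equiv.Perm (Fin k)) (n : ℕ) :
    cumC k p β n + cumT k p β n = ∑ i, p i := by
  unfold cumC cumT
  rw [← Finset.sum_add_distrib]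
  rw [show (∑ l : Fin k, ((if (l : ℕ) < n then p (β l) else 0) + if n ≤ (l : ℕ) then p (β l) else 0))
      = ∑ l : Fin k, p (β l) by
    apply Finset.sum_congr rfl; intro l _
    rcases lt_or_ge (l : ℕ) n with h | h
    · rw [if_pos h, if_neg (by omega), add_zero]
    · rw [if_neg (by omega), if_pos h, zero_add]]
  exact Equiv.sum_comp β p

lemma cumC_nonneg (k : ℕ) (p : Fin k → ℝ) (hp : ∀ i, 0 ≤ p i) (β : Equiv.Perm (Fin k)) (n : ℕ) :
    0 ≤ cumC k p β n :=
  Finset.sum_nonneg fun l _ => by split <;> [exact hp _; rfl]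

lemma cumT_nonneg (k : ℕ) (p : Fin k → ℝ) (hp : ∀ i, 0 ≤ p i) (β : Equiv.Perm (Fin k)) (n : ℕ) :
    0 ≤ cumT k p β n :=
  Finset.sum_nonneg fun l _ => by split <;> [exact hp _; rfl]

lemma cumC_le (k : ℕ) (p : Fin k → ℝ) (hp : ∀ i, 0 ≤ p i) (hsum : ∑ i, p i = 1)
    (β : Equiv.Perm (Fin k)) (n : ℕ) : cumC k p β n ≤ 1 := by
  have h1 := cumC_add_cumT k p β n
  have h2 := cumT_nonneg k p hp β n
  rw [hsum] at h1
  linarith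

lemma cumT_le (k : ℕ) (p : Fin k → ℝ) (hp : ∀ i, 0 ≤ p i) (hsum : ∑ i, p i = 1)
    (β : Equiv.Perm (Fin k)) (n : ℕ) : cumT k p β n ≤ 1 := by
  have h1 := cumC_add_cumT k p β n
  have h2 := cumC_nonneg k p hp β n
  rw [hsum] at h1
  linarith

lemma cumC_eq_D (k : ℕ) (p v : Fin k → ℝ) (β : Equiv.Perm (Fin k))
    (hsort : ∀ j j' : Fin k, j ≤ j' → v (β j') ≤ v (β j))
    (j : ℕ) (hjk : j < k) (hj : ∀ _ : j + 1 < k, Uf k v β (j + 1) < Uf k v β j) :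
    cumC k p β (j + 1) = Dfun k p v (Uf k v β j) := by
  unfold cumC Dfun
  rw [← Equiv.sum_comp β (fun i => if Uf k v β j ≤ v i then p i else 0)]
  apply Finset.sum_congr rfl
  intro l _
  have hUj : Uf k v β j = v (β ⟨j, hjk⟩) := dif_pos hjk
  by_cases h : (l : ℕ) < j + 1
  · rw [if_pos h, if_pos]
    rw [hUj]
    exact hsort l ⟨j, hjk⟩ (by rw [Fin.le_def]; simpa using by omega)
  · rw [if_neg h, if_neg]
    intro hle
    have hl1 : j + 1 ≤ (l : ℕ) := by omega
    have hkk : j + 1 < k := lt_of_le_of_lt hl1 l.isLt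
    have h2 : v (β l) ≤ Uf k v β (j + 1) := by
      rw [show Uf k v β (j+1) = v (β ⟨j+1, hkk⟩) from dif_pos hkk]
      exact hsort ⟨j+1, hkk⟩ l (by rw [Fin.le_def]; simpa using hl1)
    have := hj hkk
    linarith

lemma Uf_k (k : ℕ) (v : Fin k → ℝ) (β : Equiv.Perm (Fin k)) : Uf k v β k = 0 :=
  dif_neg (lt_irrefl k)

lemma Uf_mono (k : ℕ) (v : Fin k → ℝ) (β : Equiv.Perm (Fin k))
    (hsort : ∀ j j' : Fin k, j ≤ j' → v (β j') ≤ v (β j))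
    (n : ℕ) (h : n + 1 < k) : Uf k v β (n + 1) ≤ Uf k v β n := by
  rw [show Uf k v β (n+1) = v (β ⟨n+1, h⟩) from dif_pos h,
    show Uf k v β n = v (β ⟨n, by omega⟩) from dif_pos (by omega)]
  exact hsort ⟨n, by omega⟩ ⟨n+1, h⟩ (by rw [Fin.le_def]; simp)

lemma cptValue_eq (k : ℕ) (p v : Fin k → ℝ) (β : Equiv.Perm (Fin k)) (jr : ℕ)
    (wp wm : ℝ → ℝ) (hwp0 : wp 0 = 0)
    (hgain : ∀ j : Fin k, (j : ℕ) < jr ↔ 0 ≤ v (β j)) :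
    cptValue k p v β jr wp wm
      = (∑ j ∈ Finset.range k,
          (wp (cumC k p β (j + 1)) * (max (Uf k v β j) 0 - max (Uf k v β (j + 1)) 0)
            - wm (cumT k p β (j + 1)) * (min (Uf k v β j) 0 - min (Uf k v β (j + 1)) 0)))
        + wm (cumT k p β 0) * min (Uf k v β 0) 0 := by
  have step1 : cptValue k p v β jr wp wm
      = ∑ j ∈ Finset.range k,
          ((wp (cumC k p β (j + 1)) - wp (cumC k p β j)) * max (Uf k v β j) 0
            + (wm (cumT k p β j) - wm (cumT k p β (j + 1))) * min (Uf k v β j) 0) := by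
    unfold cptValue piPlus piMinus
    rw [← Fin.sum_univ_eq_sum_range (fun j =>
      ((wp (cumC k p β (j + 1)) - wp (cumC k p β j)) * max (Uf k v β j) 0
        + (wm (cumT k p β j) - wm (cumT k p β (j + 1))) * min (Uf k v β j) 0)) k]
    apply Finset.sum_congr rfl
    intro j _
    have hU : Uf k v β (j : ℕ) = v (β j) := by
      rw [Uf, dif_pos j.isLt]
    by_cases h : (j : ℕ) < jr
    · have h0 : 0 ≤ v (β j) := (hgain j).mp h
      rw [if_pos h, hU, max_eq_left h0, min_eq_right h0]
      ring
    · have h0 : v (β j) < 0 := by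
        have := (hgain j).mpr
        by_contra hc
        exact h (this (not_lt.mp hc))
      rw [if_neg h, hU, max_eq_right h0.le, min_eq_left h0.le]
      ring
  rw [step1]
  have tele1 : ∑ j ∈ Finset.range k,
      (wp (cumC k p β (j + 1)) * max (Uf k v β (j + 1)) 0
        - wp (cumC k p β j) * max (Uf k v β j) 0) = 0 := by
    rw [Finset.sum_range_sub (fun j => wp (cumC k p β j) * max (Uf k v β j) 0) k]
    rw [Uf_k, cumC_zero, hwp0]
    simp
  have tele2 : ∑ j ∈ Finset.range k,
      (wm (cumT k p β j) * min (Uf k v β j) 0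
        - wm (cumT k p β (j + 1)) * min (Uf k v β (j + 1)) 0)
      = wm (cumT k p β 0) * min (Uf k v β 0) 0 := by
    rw [Finset.sum_range_sub' (fun j => wm (cumT k p β j) * min (Uf k v β j) 0) k]
    rw [Uf_k]
    simp
  have expand : ∀ j ∈ Finset.range k,
      ((wp (cumC k p β (j + 1)) - wp (cumC k p β j)) * max (Uf k v β j) 0
        + (wm (cumT k p β j) - wm (cumT k p β (j + 1))) * min (Uf k v β j) 0)
      = (wp (cumC k p β (j + 1)) * (max (Uf k v β j) 0 - max (Uf k v β (j + 1)) 0)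
          - wm (cumT k p β (j + 1)) * (min (Uf k v β j) 0 - min (Uf k v β (j + 1)) 0))
        + (wp (cumC k p β (j + 1)) * max (Uf k v β (j + 1)) 0
            - wp (cumC k p β j) * max (Uf k v β j) 0)
        + (wm (cumT k p β j) * min (Uf k v β j) 0
            - wm (cumT k p β (j + 1)) * min (Uf k v β (j + 1)) 0) := by
    intro j _
    ring
  rw [Finset.sum_congr rfl expand, Finset.sum_add_distrib, Finset.sum_add_distrib, tele1, tele2]
  ring

lemma sum_two_split {k : ℕ} (a b : Fin k) (hab : a ≠ b) (f : Fin k → ℝ) :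
    ∑ i, f i = f a + (f b + ∑ i ∈ (univ \ {a}) \ {b}, f i) := by
  rw [Finset.sum_eq_add_sum_sdiff_singleton_of_mem (mem_univ a) f]
  congr 1
  exact Finset.sum_eq_add_sum_sdiff_singleton_of_mem (by simp [hab.symm, Ne.symm hab]) f

/-- CPT satisfies strict first-order stochastic dominance: shifting positive probability
mass `ε` from an outcome `a` to a strictly better outcome `b` strictly increases the CPT
value, provided the probability weighting functions are strictly increasing. -/
theorem cpt_strict_stochastic_dominance (k : ℕ) (p p' v : Fin k → ℝ)
    (a b : Fin k) (hab : a ≠ b) (hv : v a < v b)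
    (ε : ℝ) (hε : 0 < ε) (hεa : ε ≤ p a)
    (hp : ∀ i, 0 ≤ p i) (hsum : ∑ i, p i = 1)
    (hp' : p' = fun j => if j = a then p a - ε else if j = b then p b + ε else p j)
    (wp wm : ℝ → ℝ)
    (hwp : StrictMonoOn wp (Set.Icc (0:ℝ) 1)) (hwm : StrictMonoOn wm (Set.Icc (0:ℝ) 1))
    (hwp0 : wp 0 = 0) (hwp1 : wp 1 = 1) (hwm0 : wm 0 = 0) (hwm1 : wm 1 = 1)
    (β β' : Equiv.Perm (Fin k)) (jr jr' : ℕ)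
    (hsort : ∀ j j' : Fin k, j ≤ j' → v (β j') ≤ v (β j))
    (hsort' : ∀ j j' : Fin k, j ≤ j' → v (β' j') ≤ v (β' j))
    (hgain : ∀ j : Fin k, (j : ℕ) < jr ↔ 0 ≤ v (β j))
    (hgain' : ∀ j : Fin k, (j : ℕ) < jr' ↔ 0 ≤ v (β' j)) :
    cptValue k p v β jr wp wm < cptValue k p' v β' jr' wp wm := by
  have hpa : p' a = p a - ε := by rw [hp']; simp
  have hpb : p' b = p b + ε := by rw [hp']; simp [Ne.symm hab]
  have hpo : ∀ i, i ≠ a → i ≠ b → p' i = p i := by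
    intro i h1 h2; rw [hp']; simp [h1, h2]
  -- p' is a probability vector
  have hq : ∀ i, 0 ≤ p' i := by
    intro i
    by_cases h1 : i = a
    · rw [h1, hpa]; linarith
    by_cases h2 : i = b
    · rw [h2, hpb]; have := hp b; linarith
    · rw [hpo i h1 h2]; exact hp i
  have hsum' : ∑ i, p' i = 1 := by
    have h1 := sum_two_split a b hab p'
    have h2 := sum_two_split a b hab p
    have ht : ∑ i ∈ (univ \ {a}) \ {b}, p' i = ∑ i ∈ (univ \ {a}) \ {b}, p i := by
      apply Finset.sum_congr rfl
      intro i hi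
      rw [Finset.mem_sdiff, Finset.mem_sdiff, Finset.mem_singleton, Finset.mem_singleton] at hi
      exact hpo i hi.1.2 hi.2
    rw [h1, ht, hpa, hpb]
    rw [h2] at hsum
    linarith
  -- D function comparison
  have hD : ∀ t, Dfun k p v t ≤ Dfun k p' v t := by
    intro t
    unfold Dfun
    rw [sum_two_split a b hab, sum_two_split a b hab
      (fun i => if t ≤ v i then p' i else 0)]
    have ht : ∑ i ∈ (univ \ {a}) \ {b}, (if t ≤ v i then p' i else 0)
        = ∑ i ∈ (univ \ {a}) \ {b}, (if t ≤ v i then p i else 0) := by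
      apply Finset.sum_congr rfl
      intro i hi
      rw [Finset.mem_sdiff, Finset.mem_sdiff, Finset.mem_singleton, Finset.mem_singleton] at hi
      rw [hpo i hi.1.2 hi.2]
    rw [ht, hpa, hpb]
    split_ifs with h1 h2 h2 <;> try linarith
  have hDb : Dfun k p' v (v b) = Dfun k p v (v b) + ε := by
    unfold Dfun
    rw [sum_two_split a b hab (fun i => if v b ≤ v i then p' i else 0),
      sum_two_split a b hab (fun i => if v b ≤ v i then p i else 0)]
    have ht : ∑ i ∈ (univ \ {a}) \ {b}, (if v b ≤ v i then p' i else 0)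
        = ∑ i ∈ (univ \ {a}) \ {b}, (if v b ≤ v i then p i else 0) := by
      apply Finset.sum_congr rfl
      intro i hi
      rw [Finset.mem_sdiff, Finset.mem_sdiff, Finset.mem_singleton, Finset.mem_singleton] at hi
      rw [hpo i hi.1.2 hi.2]
    rw [ht, hpa, hpb]
    simp only [if_neg (not_le.mpr hv), if_pos (le_refl (v b))]
    ring
  -- the sorted value sequences coincide
  have hUeq : Uf k v β' = Uf k v β := by
    funext n
    unfold Uf
    by_cases h : n < k
    · rw [dif_pos h, dif_pos h, ← sorted_perm_eq v β β' hsort hsort' ⟨n, h⟩]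
    · rw [dif_neg h, dif_neg h]
  rw [cptValue_eq k p v β jr wp wm hwp0 hgain,
    cptValue_eq k p' v β' jr' wp wm hwp0 hgain', hUeq,
    cumT_zero, cumT_zero, hsum, hsum']
  apply add_lt_add_left
  -- bounds
  have hCmem : ∀ n, cumC k p β n ∈ Set.Icc (0:ℝ) 1 :=
    fun n => ⟨cumC_nonneg k p hp β n, cumC_le k p hp hsum β n⟩
  have hCmem' : ∀ n, cumC k p' β' n ∈ Set.Icc (0:ℝ) 1 :=
    fun n => ⟨cumC_nonneg k p' hq β' n, cumC_le k p' hq hsum' β' n⟩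
  have hTmem : ∀ n, cumT k p β n ∈ Set.Icc (0:ℝ) 1 :=
    fun n => ⟨cumT_nonneg k p hp β n, cumT_le k p hp hsum β n⟩
  have hTmem' : ∀ n, cumT k p' β' n ∈ Set.Icc (0:ℝ) 1 :=
    fun n => ⟨cumT_nonneg k p' hq β' n, cumT_le k p' hq hsum' β' n⟩
  -- C and T comparisons at a "jump" index
  have key : ∀ j : ℕ, j < k → (j + 1 < k → Uf k v β (j + 1) < Uf k v β j) →
      cumC k p β (j + 1) ≤ cumC k p' β' (j + 1) ∧
      cumT k p' β' (j + 1) ≤ cumT k p β (j + 1) := by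
    intro j hjk hjump
    have e1 : cumC k p β (j + 1) = Dfun k p v (Uf k v β j) :=
      cumC_eq_D k p v β hsort j hjk hjump
    have e2 : cumC k p' β' (j + 1) = Dfun k p' v (Uf k v β j) := by
      have := cumC_eq_D k p' v β' hsort' j hjk (by rw [hUeq]; exact hjump)
      rw [hUeq] at this
      exact this
    have hle : cumC k p β (j + 1) ≤ cumC k p' β' (j + 1) := by
      rw [e1, e2]; exact hD _
    refine ⟨hle, ?_⟩
    have t1 := cumC_add_cumT k p β (j + 1)
    have t2 := cumC_add_cumT k p' β' (j + 1)
    rw [hsum] at t1; rw [hsum'] at t2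
    linarith
  -- weak inequality for every index
  apply Finset.sum_lt_sum
  · intro j hj
    rw [Finset.mem_range] at hj
    by_cases hjk1 : j + 1 < k
    · by_cases heq : Uf k v β (j + 1) = Uf k v β j
      · rw [heq]
        simp
      · have hjump : Uf k v β (j + 1) < Uf k v β j :=
          lt_of_le_of_ne (Uf_mono k v β hsort j hjk1) heq
        obtain ⟨hC, hT⟩ := key j hj (fun _ => hjump)
        have hwple : wp (cumC k p β (j + 1)) ≤ wp (cumC k p' β' (j + 1)) :=
          hwp.monotoneOn (hCmem _) (hCmem' _) hC
        have hwmle : wm (cumT k p' β' (j + 1)) ≤ wm (cumT k p β (j + 1)) :=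
          hwm.monotoneOn (hTmem' _) (hTmem _) hT
        have hgP : 0 ≤ max (Uf k v β j) 0 - max (Uf k v β (j + 1)) 0 := by
          have := max_le_max hjump.le (le_refl (0:ℝ))
          linarith
        have hgM : 0 ≤ min (Uf k v β j) 0 - min (Uf k v β (j + 1)) 0 := by
          have := min_le_min hjump.le (le_refl (0:ℝ))
          linarith
        have h1 := mul_le_mul_of_nonneg_right hwple hgP
        have h2 := mul_le_mul_of_nonneg_right hwmle hgM
        linarith
    · have hk : j + 1 = k := by omega
      rw [hk, cumC_k, cumC_k, cumT_k, cumT_k, hsum, hsum']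
  -- strict inequality at the last position where the value equals v b
  · have hSne : (univ.filter fun j : Fin k => v (β j) = v b).Nonempty :=
      ⟨β.symm b, by simp⟩
    set js := (univ.filter fun j : Fin k => v (β j) = v b).max' hSne with hjsdef
    have hjs : v (β js) = v b :=
      (Finset.mem_filter.mp (Finset.max'_mem _ hSne)).2
    have hlt : js < β.symm a := by
      by_contra hc
      push_neg at hc
      have h1 := hsort (β.symm a) js hc
      rw [Equiv.apply_symm_apply, hjs] at h1
      linarith
    have hj1k : (js : ℕ) + 1 < k := by
      have h1 := (β.symm a).isLt
      have h2 : (js : ℕ) < (β.symm a : ℕ) := hlt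
      omega
    have hjsk : (js : ℕ) < k := by omega
    have hUjs : Uf k v β (js : ℕ) = v b := by
      rw [Uf, dif_pos hjsk]
      rw [show (⟨(js : ℕ), hjsk⟩ : Fin k) = js from Fin.eta js hjsk, hjs]
    have hU1lt : Uf k v β ((js : ℕ) + 1) < v b := by
      have h1 : Uf k v β ((js : ℕ) + 1) ≤ v b := by
        rw [← hUjs]; exact Uf_mono k v β hsort (js : ℕ) hj1k
      rcases lt_or_eq_of_le h1 with h | h
      · exact h
      · exfalso
        have hm : (⟨(js : ℕ) + 1, hj1k⟩ : Fin k) ∈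
            (univ.filter fun j : Fin k => v (β j) = v b) := by
          rw [Finset.mem_filter]
          refine ⟨mem_univ _, ?_⟩
          rw [← h, Uf, dif_pos hj1k]
        have hle := Finset.le_max' _ _ hm
        rw [← hjsdef] at hle
        have h2 : (js : ℕ) + 1 ≤ (js : ℕ) := hle
        omega
    refine ⟨(js : ℕ), Finset.mem_range.mpr hjsk, ?_⟩
    have hjump : (js : ℕ) + 1 < k → Uf k v β ((js : ℕ) + 1) < Uf k v β (js : ℕ) := by
      intro _
      rw [hUjs]; exact hU1lt
    obtain ⟨hC, hT⟩ := key (js : ℕ) hjsk hjump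
    -- strict comparison of cumulatives
    have e1 : cumC k p β ((js : ℕ) + 1) = Dfun k p v (v b) := by
      rw [cumC_eq_D k p v β hsort (js : ℕ) hjsk hjump, hUjs]
    have e2 : cumC k p' β' ((js : ℕ) + 1) = Dfun k p' v (v b) := by
      have := cumC_eq_D k p' v β' hsort' (js : ℕ) hjsk (by rw [hUeq]; exact hjump)
      rw [hUeq, hUjs] at this
      exact this
    have hCs : cumC k p β ((js : ℕ) + 1) < cumC k p' β' ((js : ℕ) + 1) := by
      rw [e1, e2, hDb]
      linarith
    have hTs : cumT k p' β' ((js : ℕ) + 1) < cumT k p β ((js : ℕ) + 1) := by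
      have t1 := cumC_add_cumT k p β ((js : ℕ) + 1)
      have t2 := cumC_add_cumT k p' β' ((js : ℕ) + 1)
      rw [hsum] at t1; rw [hsum'] at t2
      linarith
    have hwps : wp (cumC k p β ((js : ℕ) + 1)) < wp (cumC k p' β' ((js : ℕ) + 1)) :=
      hwp (hCmem _) (hCmem' _) hCs
    have hwms : wm (cumT k p' β' ((js : ℕ) + 1)) < wm (cumT k p β ((js : ℕ) + 1)) :=
      hwm (hTmem' _) (hTmem _) hTs
    have hwple := hwps.le
    have hwmle := hwms.le
    have hgap : 0 < (max (Uf k v β (js : ℕ)) 0 - max (Uf k v β ((js : ℕ) + 1)) 0)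
        + (min (Uf k v β (js : ℕ)) 0 - min (Uf k v β ((js : ℕ) + 1)) 0) := by
      have h1 := max_add_min (Uf k v β (js : ℕ)) 0
      have h2 := max_add_min (Uf k v β ((js : ℕ) + 1)) 0
      have h3 : Uf k v β ((js : ℕ) + 1) < Uf k v β (js : ℕ) := hjump hj1k
      linarith
    have hgP : 0 ≤ max (Uf k v β (js : ℕ)) 0 - max (Uf k v β ((js : ℕ) + 1)) 0 := by
      have := max_le_max (hjump hj1k).le (le_refl (0:ℝ))
      linarith
    have hgM : 0 ≤ min (Uf k v β (js : ℕ)) 0 - min (Uf k v β ((js : ℕ) + 1)) 0 := by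
      have := min_le_min (hjump hj1k).le (le_refl (0:ℝ))
      linarith
    rcases lt_or_ge 0 (max (Uf k v β (js : ℕ)) 0 - max (Uf k v β ((js : ℕ) + 1)) 0) with hP | hP
    · have h1 := mul_lt_mul_of_pos_right hwps hP
      have h2 := mul_le_mul_of_nonneg_right hwmle hgM
      linarith
    · have hMpos : 0 < min (Uf k v β (js : ℕ)) 0 - min (Uf k v β ((js : ℕ) + 1)) 0 := by
        linarith
      have h1 := mul_le_mul_of_nonneg_right hwple hgP
      have h2 := mul_lt_mul_of_pos_right hwms hMpos
      linarith
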